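/- Let f : ℝ → ℝ be continuous and bounded. Define g(u) := ∫_u^{u+1} f(t) dt. If g(u) = g(u+1) for all u ∈ ℝ (i.e., g is 1-periodic), then g is constant. -/
import Mathlib


/-- If f is continuous and bounded and g(u) := ∫_u^{u+1} f is
1-periodic, then g is constant. -/
theorem periodic_window_integral_constant
    (f : ℝ → ℝ) (hf : Continuous f) (M : ℝ) (hbd : ∀ t : ℝ, |f t| ≤ M)
    (hper : ∀ u : ℝ, (∫ t in u..(u + 1), f t) = ∫ t in (u + 1)..(u + 2), f t) :
    ∀ u v : ℝ, (∫ t in u..(u + 1), f t) = ∫ t in v..(v + 1), f t := by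
  have hM0 : 0 ≤ M := le_trans (abs_nonneg _) (hbd 0)
  intro u v
  set g : ℝ → ℝ := fun w => ∫ t in w..(w + 1), f t with hg
  have hint : ∀ a b : ℝ, IntervalIntegrable f MeasureTheory.volume a b :=
    fun a b => hf.intervalIntegrable a b
  have hbound : ∀ a b : ℝ, |∫ t in a..b, f t| ≤ M * |b - a| := by
    intro a b
    have := intervalIntegral.norm_integral_le_of_norm_le_const
      (C := M) (f := f) (a := a) (b := b) (fun t _ => hbd t)
    simpa using this
  have hshift : ∀ w : ℝ, ∀ n : ℕ, g (w + n) = g w := by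
    intro w n
    induction n with
    | zero => simp
    | succ n ih =>
      have h := hper (w + n)
      have : g (w + n + 1) = g (w + n) := by
        simp only [hg]
        rw [show w + (n:ℝ) + 1 + 1 = w + (n:ℝ) + 2 by ring]
        exact h.symm
      calc g (w + (n + 1 : ℕ)) = g (w + n + 1) := by push_cast; ring_nf
        _ = g (w + n) := this
        _ = g w := ih
  have hN : ∀ w : ℝ, ∀ n : ℕ, (∫ t in w..(w + n), f t) = n * g w := by
    intro w n
    induction n with
    | zero => simp
    | succ n ih =>
      have h1 : (∫ t in w..(w + (n + 1 : ℕ)), f t)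
          = (∫ t in w..(w + n), f t) + ∫ t in (w + n)..((w + n) + 1), f t := by
        rw [intervalIntegral.integral_add_adjacent_intervals (hint _ _) (hint _ _)]
        congr 1
        push_cast; ring
      rw [h1, ih]
      have := hshift w n
      simp only [hg] at this ⊢
      rw [this]
      push_cast; ring
  have key : ∀ n : ℕ, (n : ℝ) * |g u - g v| ≤ 2 * M * |v - u| := by
    intro n
    have hsplit : (∫ t in u..(u + n), f t)
        = (∫ t in u..v, f t) + (∫ t in v..(v + n), f t)
          + ∫ t in (v + n)..(u + n), f t := by
      rw [intervalIntegral.integral_add_adjacent_intervals (hint _ _) (hint _ _),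
        intervalIntegral.integral_add_adjacent_intervals (hint _ _) (hint _ _)]
    have hd : (n : ℝ) * (g u - g v)
        = (∫ t in u..v, f t) + ∫ t in (v + n)..(u + n), f t := by
      have h1 := hN u n
      have h2 := hN v n
      nlinarith [hsplit, h1, h2]
    calc (n : ℝ) * |g u - g v| = |(n : ℝ) * (g u - g v)| := by
          rw [abs_mul, Nat.abs_cast]
      _ ≤ |∫ t in u..v, f t| + |∫ t in (v + n)..(u + n), f t| := by
          rw [hd]; exact abs_add_le _ _
      _ ≤ M * |v - u| + M * |v - u| := by
          have h1 := hbound u v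
          have h2 := hbound (v + n) (u + n)
          have : |u + n - (v + n)| = |v - u| := by
            rw [show u + (n:ℝ) - (v + n) = -(v - u) by ring, abs_neg]
          rw [this] at h2
          linarith
      _ = 2 * M * |v - u| := by ring
  have heq : g u = g v := by
    by_contra hne
    have hd : 0 < |g u - g v| := abs_pos.mpr (sub_ne_zero.mpr hne)
    obtain ⟨n, hn⟩ := exists_nat_gt (2 * M * |v - u| / |g u - g v|)
    have := key n
    have h2 : 2 * M * |v - u| / |g u - g v| < n := hn
    rw [div_lt_iff₀ hd] at h2
    linarith
  exact heq
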